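/- If T is a consistent, complete, recursively axiomatized first-order theory extending Peano Arithmetic, then there exists at least one standard sentence s such that T proves remote(⁰⌜s⌝); consequently the defining condition of 𝔎 (the minimal code of a proof of a remote sentence) is satisfiable in T. -/

import Mathlib

open FirstOrder FirstOrder.Language

namespace GodelStalk

/-- Function symbols of the first-order language of arithmetic:
zero, successor, addition, multiplication. -/
inductive ArithFunc : ℕ → Type
  | zero : ArithFunc 0
  | succ : ArithFunc 1
  | add : ArithFunc 2
  | mul : ArithFunc 2

/-- Relation symbols of the first-order language of arithmetic: `≤`. -/
inductive ArithRel : ℕ → Type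
  | le : ArithRel 2

/-- The first-order language of arithmetic. -/
def Larith : FirstOrder.Language := ⟨ArithFunc, ArithRel⟩

/-- The numeral `⁰n`: `n`-many repeated applications of the successor symbol to zero. -/
def num {α : Type} : ℕ → Larith.Term α
  | 0 => Term.func ArithFunc.zero ![]
  | n + 1 => Term.func ArithFunc.succ ![num n]

/-- Successor term. -/
def succT {α : Type} (t : Larith.Term α) : Larith.Term α :=
  Term.func ArithFunc.succ ![t]

/-- Addition term. -/
def addT {α : Type} (t u : Larith.Term α) : Larith.Term α :=
  Term.func ArithFunc.add ![t, u]

/-- Multiplication term. -/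
def mulT {α : Type} (t u : Larith.Term α) : Larith.Term α :=
  Term.func ArithFunc.mul ![t, u]

/-- The formula `t ≤ u`. -/
def leF {α : Type} (t u : Larith.Term α) : Larith.Formula α :=
  Relations.formula₂ ArithRel.le t u

/-- The formula `t < u`, rendered as `S t ≤ u`. -/
def ltF {α : Type} (t u : Larith.Term α) : Larith.Formula α :=
  leF (succT t) u

/-- Universal quantification over one extra variable. -/
noncomputable def all1 {α : Type} (φ : Larith.Formula (α ⊕ Fin 1)) : Larith.Formula α :=
  Formula.iAlls (Fin 1) φ

/-- Existential quantification over one extra variable. -/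
noncomputable def ex1 {α : Type} (φ : Larith.Formula (α ⊕ Fin 1)) : Larith.Formula α :=
  Formula.iExs (Fin 1) φ

/-- Substitute a term for the unique free variable of a formula. -/
def app1 {α : Type} (φ : Larith.Formula (Fin 1)) (t : Larith.Term α) : Larith.Formula α :=
  φ.subst fun _ => t

/-- Substitute two terms for the two free variables of a formula. -/
def app2 {α : Type} (φ : Larith.Formula (Fin 2)) (t u : Larith.Term α) : Larith.Formula α :=
  φ.subst ![t, u]

/-- Substitute a term for the distinguished (`Sum.inr`) free variable of a formula. -/
def substLast {α : Type} (φ : Larith.Formula (α ⊕ Fin 1)) (t : Larith.Term α) :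
    Larith.Formula α :=
  φ.subst (Sum.elim Term.var fun _ => t)

/-- `isMinOf φ t` expresses `t = min z : φ(z)`, i.e. `φ(t) ∧ ∀ w < t, ¬φ(w)`. -/
noncomputable def isMinOf {α : Type} (φ : Larith.Formula (α ⊕ Fin 1)) (t : Larith.Term α) :
    Larith.Formula α :=
  substLast φ t ⊓ all1 (ltF (Term.var (Sum.inr 0)) (t.relabel Sum.inl) ⟹ ∼φ)

/-- `minProofOf pf c t` expresses `t = min z : pf(z, c)`. -/
noncomputable def minProofOf {α : Type} (pf : Larith.Formula (Fin 2)) (c t : Larith.Term α) :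
    Larith.Formula α :=
  isMinOf (app2 pf (Term.var (Sum.inr 0)) (c.relabel Sum.inl)) t

/-- Provability within the theory `T` (semantic consequence, which by the Gödel
completeness theorem coincides with first-order provability). -/
def Proves (T : Larith.Theory) (φ : Larith.Sentence) : Prop :=
  T ⊨ᵇ φ

/-- `T` is consistent. -/
def Consistent (T : Larith.Theory) : Prop :=
  ¬ Proves T ⊥

/-- `T` is complete: it decides every sentence. -/
def Complete (T : Larith.Theory) : Prop :=
  ∀ φ : Larith.Sentence, Proves T φ ∨ Proves T (∼φ)

/-- Universal closure over `Fin k`-many free variables. -/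
noncomputable def closure {k : ℕ} (φ : Larith.Formula (Fin k)) : Larith.Sentence :=
  Formula.iAlls (Fin k) (φ.relabel Sum.inr)

/-- The axioms of Robinson arithmetic `Q` (with `≤` defined from addition). -/
noncomputable def QTheory : Larith.Theory :=
  { closure (∼(Term.equal (succT (Term.var (0 : Fin 1))) (num 0))),
    closure (Term.equal (succT (Term.var (0 : Fin 2))) (succT (Term.var 1)) ⟹
      Term.equal (Term.var 0) (Term.var (1 : Fin 2))),
    closure (∼(Term.equal (Term.var (0 : Fin 1)) (num 0)) ⟹
      ex1 (Term.equal (Term.var (Sum.inl 0)) (succT (Term.var (Sum.inr (0 : Fin 1)))) :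
        Larith.Formula (Fin 1 ⊕ Fin 1))),
    closure (Term.equal (addT (Term.var (0 : Fin 1)) (num 0)) (Term.var 0)),
    closure (Term.equal (addT (Term.var (0 : Fin 2)) (succT (Term.var 1)))
      (succT (addT (Term.var 0) (Term.var (1 : Fin 2))))),
    closure (Term.equal (mulT (Term.var (0 : Fin 1)) (num 0)) (num 0)),
    closure (Term.equal (mulT (Term.var (0 : Fin 2)) (succT (Term.var 1)))
      (addT (mulT (Term.var 0) (Term.var 1)) (Term.var (0 : Fin 2)))),
    closure ((leF (Term.var (0 : Fin 2)) (Term.var 1)) ⇔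
      ex1 (Term.equal (addT (Term.var (Sum.inr (0 : Fin 1))) (Term.var (Sum.inl 0)))
        (Term.var (Sum.inl (1 : Fin 2))))) }

/-- The induction axiom for a formula `φ` with parameters `Fin k` and induction
variable the distinguished `Sum.inr` variable. -/
noncomputable def inductionSentence {k : ℕ} (φ : Larith.Formula (Fin k ⊕ Fin 1)) :
    Larith.Sentence :=
  closure ((substLast φ (num 0) ⊓
      all1 (φ ⟹ φ.subst (Sum.elim (Term.var ∘ Sum.inl)
        fun _ => succT (Term.var (Sum.inr 0))))) ⟹
    all1 φ)

/-- Peano Arithmetic: Robinson arithmetic together with the induction scheme. -/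
noncomputable def PATheory : Larith.Theory :=
  QTheory ∪ { σ | ∃ (k : ℕ) (φ : Larith.Formula (Fin k ⊕ Fin 1)), σ = inductionSentence φ }


/-! ### The extension `E_s(v)`, `remote`, and `𝔎` (minimality version) -/

/-- `extFormulaAt pf c t` is the extension formula `E_s` of the sentence `s` with
Gödel code `c`, evaluated at the term `t`:
`∀x ∀y (Proof_T(x, t) ∧ [y = min z : Proof_T(z, ⁰c)] → x ≥ y)`. -/
noncomputable def extFormulaAt {α : Type} (pf : Larith.Formula (Fin 2)) (c : ℕ)
    (t : Larith.Term α) : Larith.Formula α :=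
  Formula.iAlls (Fin 2)
    ((app2 pf (Term.var (Sum.inr 0)) (t.relabel Sum.inl) ⊓
        minProofOf pf (num c) (Term.var (Sum.inr 1))) ⟹
      leF (Term.var (Sum.inr 1)) (Term.var (Sum.inr 0)))

/-- The extension `E_s(v)` of the sentence `s` with Gödel code `c`, as a formula
in the single free variable `v`. -/
noncomputable def extFormula (pf : Larith.Formula (Fin 2)) (c : ℕ) :
    Larith.Formula (Fin 1) :=
  extFormulaAt pf c (Term.var 0)

/-- `remoteAt pf dgn t` is the formula `remote(t)`:
`∃x ∃k ∃z (Dgn(x, t) ∧ k = min n : Proof_T(n, t) ∧ z = min m : Proof_T(m, x) ∧ z < k)`. -/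
noncomputable def remoteAt {α : Type} (pf dgn : Larith.Formula (Fin 2))
    (t : Larith.Term α) : Larith.Formula α :=
  Formula.iExs (Fin 3)
    (app2 dgn (Term.var (Sum.inr 0)) (t.relabel Sum.inl) ⊓
      minProofOf pf (t.relabel Sum.inl) (Term.var (Sum.inr 1)) ⊓
      minProofOf pf (Term.var (Sum.inr 0)) (Term.var (Sum.inr 2)) ⊓
      ltF (Term.var (Sum.inr 2)) (Term.var (Sum.inr 1)))

/-- `∃y (remote(y) ∧ Proof_T(t, y))` : `t` is (the code of) a proof of a remote sentence. -/
noncomputable def provesRemoteAt {α : Type} (pf dgn : Larith.Formula (Fin 2))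
    (t : Larith.Term α) : Larith.Formula α :=
  ex1 (remoteAt pf dgn (Term.var (Sum.inr 0)) ⊓
    app2 pf (t.relabel Sum.inl) (Term.var (Sum.inr 0)))

/-- `isKAt pf dgn t` is the defining condition `t = 𝔎`, that is,
`t = min k : ∃y (remote(y) ∧ Proof_T(k, y))`. -/
noncomputable def isKAt {α : Type} (pf dgn : Larith.Formula (Fin 2))
    (t : Larith.Term α) : Larith.Formula α :=
  isMinOf (provesRemoteAt pf dgn (Term.var (Sum.inr 0))) t

/-- `geqKAt pf dgn t` expresses `t ≥ 𝔎`: `∀w (w = 𝔎 → w ≤ t)`. -/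
noncomputable def geqKAt {α : Type} (pf dgn : Larith.Formula (Fin 2))
    (t : Larith.Term α) : Larith.Formula α :=
  all1 (isKAt pf dgn (Term.var (Sum.inr 0)) ⟹
    leF (Term.var (Sum.inr 0)) (t.relabel Sum.inl))

/-- A bundle of the standard arithmetization data for the recursively axiomatized
theory `T`: Gödel's arithmetized proof predicate `ProofF` (i.e. `Proof_T`), a Gödel
coding `code` of sentences, Rosser's arithmetized negation function `negfn`, and the
syntactic diagonalization operator `diag` (satisfying the diagonal lemma). -/
structure GodelSetting (T : Larith.Theory) : Type where
  /-- Gödel's arithmetized provability predicate `Proof_T(x, y)`. -/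
  ProofF : Larith.Formula (Fin 2)
  /-- The arithmetical formula `Dgn(x, y)`. -/
  DgnF : Larith.Formula (Fin 2)
  /-- Gödel coding of sentences. -/
  code : Larith.Sentence → ℕ
  /-- Rosser's arithmetized negation function. -/
  negfn : ℕ → ℕ
  /-- The syntactic diagonalization `φ(v) ↦ D(φ(v))`. -/
  diag : Larith.Formula (Fin 1) → Larith.Sentence
  /-- The diagonal lemma: `T ⊢ D(φ) ↔ φ(⁰⌜D(φ)⌝)`. -/
  diag_spec : ∀ φ : Larith.Formula (Fin 1),
    Proves T (diag φ ⇔ app1 φ (num (code (diag φ))))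
  /-- If `T ⊢ s` then some standard natural number codes a proof of `s`. -/
  proof_complete : ∀ s : Larith.Sentence, Proves T s →
    ∃ n : ℕ, Proves T (app2 ProofF (num n) (num (code s)))
  /-- Conversely, a standardly coded internal proof of `s` yields `T ⊢ s`. -/
  proof_sound : ∀ (s : Larith.Sentence) (n : ℕ),
    Proves T (app2 ProofF (num n) (num (code s))) → Proves T s
  /-- `Proof_T` is a decidable (Δ₁) predicate on standard naturals. -/
  proof_decide : ∀ n m : ℕ,
    Proves T (app2 ProofF (num n) (num m)) ∨ Proves T (∼(app2 ProofF (num n) (num m)))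
  /-- `negfn` sends the code of a sentence to the code of its negation. -/
  negfn_spec : ∀ s : Larith.Sentence, negfn (code s) = code (∼s)

/-- The formula `Dgn(x, y)` represents in `T` the computable map sending the Gödel
code of a sentence `s` to the Gödel code of the diagonal sentence `D(E_s(v))` of
its extension: `T ⊢ Dgn(⁰⌜D(E_s(v))⌝, ⁰⌜s⌝)` and
`T ⊢ ∀x (Dgn(x, ⁰⌜s⌝) → x = ⁰⌜D(E_s(v))⌝)`. -/
def DgnRepresents (T : Larith.Theory) (G : GodelSetting T) : Prop :=
  (∀ s : Larith.Sentence,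
    Proves T (app2 G.DgnF (num (G.code (G.diag (extFormula G.ProofF (G.code s)))))
      (num (G.code s)))) ∧
  (∀ s : Larith.Sentence,
    Proves T (all1 (app2 G.DgnF (Term.var (Sum.inr 0)) (num (G.code s)) ⟹
      Term.equal (Term.var (Sum.inr 0))
        (num (G.code (G.diag (extFormula G.ProofF (G.code s))))))))


section Sem
variable {M : Type} [Larith.Structure M]

def z0 : M := Structure.funMap (L := Larith) ArithFunc.zero ![]
def sc (a : M) : M := Structure.funMap (L := Larith) ArithFunc.succ ![a]
def ad (a b : M) : M := Structure.funMap (L := Larith) ArithFunc.add ![a, b]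
def leR (a b : M) : Prop := Structure.RelMap (L := Larith) ArithRel.le ![a, b]
def ltR (a b : M) : Prop := leR (sc a) b
def nm : ℕ → M
  | 0 => z0
  | n + 1 => sc (nm n)

@[simp] lemma realize_num {α : Type} (v : α → M) (n : ℕ) :
    (num n : Larith.Term α).realize v = nm n := by
  induction n with
  | zero =>
      simp only [num, nm, Term.realize, z0]
      congr; funext i; exact i.elim0
  | succ n ih =>
      simp only [num, nm, Term.realize, sc]
      congr; funext i; fin_cases i; simpa

@[simp] lemma realize_succT {α : Type} (v : α → M) (t : Larith.Term α) :
    (succT t).realize v = sc (t.realize v) := by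
  simp only [succT, Term.realize, sc]
  congr; funext i; fin_cases i; simp

@[simp] lemma realize_leF {α : Type} (v : α → M) (t u : Larith.Term α) :
    (leF t u).Realize v ↔ leR (t.realize v) (u.realize v) := by
  simp only [leF, Formula.realize_rel₂, leR]
  exact Formula.realize_rel₂

@[simp] lemma realize_ltF {α : Type} (v : α → M) (t u : Larith.Term α) :
    (ltF t u).Realize v ↔ ltR (t.realize v) (u.realize v) := by
  simp only [ltF, realize_leF, realize_succT, ltR]

end Sem

section Sem2
variable {M : Type} [Larith.Structure M]

omit [Larith.Structure M] in
lemma fin1_eta (i : Fin 1 → M) : i = fun _ => i 0 :=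
  funext fun x => by rw [Subsingleton.elim x 0]

lemma frealize_subst {α β : Type} (φ : Larith.Formula α) (tf : α → Larith.Term β)
    (v : β → M) :
    Formula.Realize (φ.subst tf) v ↔ φ.Realize (fun a => (tf a).realize v) :=
  BoundedFormula.realize_subst

lemma realize_all1 {α : Type} (φ : Larith.Formula (α ⊕ Fin 1)) (v : α → M) :
    (all1 φ).Realize v ↔ ∀ a : M, φ.Realize (Sum.elim v (fun _ => a)) := by
  rw [all1, Formula.realize_iAlls]
  constructor
  · intro h a; exact h (fun _ => a)
  · intro h i; rw [fin1_eta i]; exact h (i 0)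

lemma realize_ex1 {α : Type} (φ : Larith.Formula (α ⊕ Fin 1)) (v : α → M) :
    (ex1 φ).Realize v ↔ ∃ a : M, φ.Realize (Sum.elim v (fun _ => a)) := by
  rw [ex1, Formula.realize_iExs]
  constructor
  · rintro ⟨i, h⟩; rw [fin1_eta i] at h; exact ⟨i 0, h⟩
  · rintro ⟨a, h⟩; exact ⟨fun _ => a, h⟩

lemma realize_app1 {α : Type} (φ : Larith.Formula (Fin 1)) (t : Larith.Term α) (v : α → M) :
    Formula.Realize (app1 φ t) v ↔ φ.Realize (fun _ => t.realize v) := by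
  rw [app1, frealize_subst]

lemma realize_app2 {α : Type} (φ : Larith.Formula (Fin 2)) (t u : Larith.Term α) (v : α → M) :
    Formula.Realize (app2 φ t u) v ↔ φ.Realize ![t.realize v, u.realize v] := by
  rw [app2, frealize_subst]
  have e : (fun a => (![t, u] a).realize v) = ![t.realize v, u.realize v] := by
    funext i; fin_cases i <;> simp
  rw [e]

lemma realize_substLast {α : Type} (φ : Larith.Formula (α ⊕ Fin 1)) (t : Larith.Term α)
    (v : α → M) :
    Formula.Realize (substLast φ t) v ↔ φ.Realize (Sum.elim v (fun _ => t.realize v)) := by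
  rw [substLast, frealize_subst]
  have e : (fun a : α ⊕ Fin 1 => ((Sum.elim Term.var (fun _ => t) : α ⊕ Fin 1 → Larith.Term α) a).realize v) =
      Sum.elim v (fun _ => t.realize v) := by
    funext x; rcases x with x | x <;> simp
  rw [e]

lemma realize_isMinOf {α : Type} (φ : Larith.Formula (α ⊕ Fin 1)) (t : Larith.Term α)
    (v : α → M) :
    (isMinOf φ t).Realize v ↔
      (φ.Realize (Sum.elim v (fun _ => t.realize v)) ∧
        ∀ a : M, ltR a (t.realize v) → ¬ φ.Realize (Sum.elim v (fun _ => a))) := by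
  rw [isMinOf, Formula.realize_inf, realize_substLast, realize_all1]
  refine and_congr Iff.rfl (forall_congr' fun a => ?_)
  rw [Formula.realize_imp, realize_ltF, Formula.realize_not]
  simp [Term.realize_relabel]

end Sem2

section Sem3
variable {M : Type} [Larith.Structure M]

@[simp] lemma realize_addT {α : Type} (v : α → M) (t u : Larith.Term α) :
    (addT t u).realize v = ad (t.realize v) (u.realize v) := by
  simp only [addT, Term.realize, ad]
  congr; funext i; fin_cases i <;> simp

/-- realization of the `Proof` formula -/
def PfR (pf : Larith.Formula (Fin 2)) (a b : M) : Prop := pf.Realize ![a, b]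

/-- `y` is the minimal proof of (the sentence coded by) `c`. -/
def IsMinPf (pf : Larith.Formula (Fin 2)) (y c : M) : Prop :=
  PfR pf y c ∧ ∀ w : M, ltR w y → ¬ PfR pf w c

lemma realize_minProofOf {α : Type} (pf : Larith.Formula (Fin 2)) (c t : Larith.Term α)
    (v : α → M) :
    (minProofOf pf c t).Realize v ↔ IsMinPf pf (t.realize v) (c.realize v) := by
  rw [minProofOf, realize_isMinOf, IsMinPf]
  refine and_congr ?_ (forall_congr' fun w => imp_congr Iff.rfl (not_congr ?_)) <;>
    rw [realize_app2] <;>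
    simp [PfR, Term.realize_relabel, Sum.elim_comp_inl]

lemma realize_extFormulaAt {α : Type} (pf : Larith.Formula (Fin 2)) (c : ℕ)
    (t : Larith.Term α) (v : α → M) :
    (extFormulaAt pf c t).Realize v ↔
      ∀ x y : M, PfR pf x (t.realize v) → IsMinPf pf y (nm c) → leR y x := by
  rw [extFormulaAt, Formula.realize_iAlls]
  constructor
  · intro h x y h1 h2
    have := h ![x, y]
    rw [Formula.realize_imp, Formula.realize_inf, realize_app2, realize_minProofOf,
      realize_leF] at this
    simp only [Term.realize_var, Term.realize_relabel, Sum.elim_comp_inl, Sum.elim_inr,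
      realize_num, Matrix.cons_val_zero, Matrix.cons_val_one, Matrix.head_cons] at this
    exact this ⟨h1, h2⟩
  · intro h i
    rw [Formula.realize_imp, Formula.realize_inf, realize_app2, realize_minProofOf,
      realize_leF]
    simp only [Term.realize_var, Term.realize_relabel, Sum.elim_comp_inl, Sum.elim_inr,
      realize_num]
    rintro ⟨h1, h2⟩
    exact h _ _ h1 h2

/-- realization of `Dgn` -/
def DgnR (dgn : Larith.Formula (Fin 2)) (a b : M) : Prop := dgn.Realize ![a, b]

/-- semantic version of `remote(y)` -/
def RemR (pf dgn : Larith.Formula (Fin 2)) (y : M) : Prop :=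
  ∃ x k z : M, DgnR dgn x y ∧ IsMinPf pf k y ∧ IsMinPf pf z x ∧ ltR z k

lemma realize_remoteAt {α : Type} (pf dgn : Larith.Formula (Fin 2)) (t : Larith.Term α)
    (v : α → M) :
    (remoteAt pf dgn t).Realize v ↔ RemR pf dgn (t.realize v) := by
  rw [remoteAt, Formula.realize_iExs]
  constructor
  · rintro ⟨i, h⟩
    rw [Formula.realize_inf, Formula.realize_inf, Formula.realize_inf, realize_app2,
      realize_minProofOf, realize_minProofOf, realize_ltF] at h
    simp only [Term.realize_var, Term.realize_relabel, Sum.elim_comp_inl, Sum.elim_inr] at h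
    exact ⟨i 0, i 1, i 2, h.1.1.1, h.1.1.2, h.1.2, h.2⟩
  · rintro ⟨x, k, z, h1, h2, h3, h4⟩
    refine ⟨![x, k, z], ?_⟩
    rw [Formula.realize_inf, Formula.realize_inf, Formula.realize_inf, realize_app2,
      realize_minProofOf, realize_minProofOf, realize_ltF]
    simp only [Term.realize_var, Term.realize_relabel, Sum.elim_comp_inl, Sum.elim_inr,
      Matrix.cons_val_zero, Matrix.cons_val_one, Matrix.head_cons, Matrix.cons_val_two,
      Matrix.tail_cons]
    exact ⟨⟨⟨h1, h2⟩, h3⟩, h4⟩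

/-- semantic version of `∃y (remote(y) ∧ Proof(b, y))` -/
def PRemR (pf dgn : Larith.Formula (Fin 2)) (b : M) : Prop :=
  ∃ y : M, RemR pf dgn y ∧ PfR pf b y

lemma realize_provesRemoteAt {α : Type} (pf dgn : Larith.Formula (Fin 2))
    (t : Larith.Term α) (v : α → M) :
    (provesRemoteAt pf dgn t).Realize v ↔ PRemR pf dgn (t.realize v) := by
  rw [provesRemoteAt, realize_ex1]
  refine exists_congr fun y => ?_
  rw [Formula.realize_inf, realize_remoteAt, realize_app2]
  simp [PRemR, PfR, Term.realize_relabel, Sum.elim_comp_inl]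

lemma realize_isKAt {α : Type} (pf dgn : Larith.Formula (Fin 2)) (t : Larith.Term α)
    (v : α → M) :
    (isKAt pf dgn t).Realize v ↔
      (PRemR pf dgn (t.realize v) ∧
        ∀ w : M, ltR w (t.realize v) → ¬ PRemR pf dgn w) := by
  rw [isKAt, realize_isMinOf]
  refine and_congr ?_ (forall_congr' fun w => imp_congr Iff.rfl (not_congr ?_)) <;>
    rw [realize_provesRemoteAt] <;> simp

lemma realize_closure {k : ℕ} (φ : Larith.Formula (Fin k)) :
    (M ⊨ closure φ) ↔ ∀ i : Fin k → M, φ.Realize i := by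
  rw [closure, Sentence.Realize, Formula.realize_iAlls]
  constructor <;> intro h i <;> simpa [Formula.realize_relabel] using h i

end Sem3

section PAmodel
variable {M : Type} [Larith.Structure M] (hax : ∀ σ ∈ PATheory, M ⊨ σ)
include hax

lemma sem_induction {k : ℕ} (φ : Larith.Formula (Fin k ⊕ Fin 1)) (p : Fin k → M)
    (h0 : φ.Realize (Sum.elim p fun _ => z0))
    (hs : ∀ a : M, φ.Realize (Sum.elim p fun _ => a) →
      φ.Realize (Sum.elim p fun _ => sc a)) :
    ∀ a : M, φ.Realize (Sum.elim p fun _ => a) := by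
  have h := hax (inductionSentence φ) (Or.inr ⟨k, φ, rfl⟩)
  rw [inductionSentence, realize_closure] at h
  have h2 := h p
  rw [Formula.realize_imp, Formula.realize_inf, realize_substLast, realize_all1,
    realize_all1] at h2
  refine h2 ⟨?_, fun a ha => ?_⟩
  · simp only [realize_num]
    exact h0
  · refine (frealize_subst φ _ (Sum.elim p fun _ => a)).2 ?_
    have e : (fun x : Fin k ⊕ Fin 1 =>
        ((Sum.elim (Term.var ∘ Sum.inl) fun _ => succT (Term.var (Sum.inr 0)) :
          Fin k ⊕ Fin 1 → Larith.Term (Fin k ⊕ Fin 1)) x).realize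
          (Sum.elim p fun _ => a)) = Sum.elim p (fun _ => sc a) := by
      funext x; rcases x with x | x <;> simp
    rw [e]
    exact hs a ha

lemma sem_q1 : ∀ a : M, sc a ≠ z0 := by
  have h := hax _ (Or.inl (show _ ∈ QTheory by simp [QTheory]) :
    closure (∼(Term.equal (succT (Term.var (0 : Fin 1))) (num 0))) ∈ PATheory)
  rw [realize_closure] at h
  intro a
  have := h (fun _ => a)
  rw [Formula.realize_not, Formula.realize_equal] at this
  simpa [nm] using this

lemma sem_q2 : ∀ a b : M, sc a = sc b → a = b := by
  have h := hax _ (Or.inl (show _ ∈ QTheory by simp [QTheory]) :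
    closure (Term.equal (succT (Term.var (0 : Fin 2))) (succT (Term.var 1)) ⟹
      Term.equal (Term.var 0) (Term.var (1 : Fin 2))) ∈ PATheory)
  rw [realize_closure] at h
  intro a b
  have := h ![a, b]
  rw [Formula.realize_imp, Formula.realize_equal, Formula.realize_equal] at this
  simpa using this

lemma sem_q3 : ∀ a : M, a ≠ z0 → ∃ b : M, a = sc b := by
  have h := hax _ (Or.inl (show _ ∈ QTheory by simp [QTheory]) :
    closure (∼(Term.equal (Term.var (0 : Fin 1)) (num 0)) ⟹
      ex1 (Term.equal (Term.var (Sum.inl 0)) (succT (Term.var (Sum.inr (0 : Fin 1)))) :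
        Larith.Formula (Fin 1 ⊕ Fin 1))) ∈ PATheory)
  rw [realize_closure] at h
  intro a ha
  have := h (fun _ => a)
  rw [Formula.realize_imp, Formula.realize_not, Formula.realize_equal, realize_ex1] at this
  simp only [Term.realize_var, realize_num, realize_succT, Sum.elim_inl, Sum.elim_inr] at this
  obtain ⟨b, hb⟩ := this ha
  exact ⟨b, by simpa using hb⟩

lemma sem_q4 : ∀ a : M, ad a z0 = a := by
  have h := hax _ (Or.inl (show _ ∈ QTheory by simp [QTheory]) :
    closure (Term.equal (addT (Term.var (0 : Fin 1)) (num 0)) (Term.var 0)) ∈ PATheory)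
  rw [realize_closure] at h
  intro a
  have := h (fun _ => a)
  rw [Formula.realize_equal] at this
  simpa [nm] using this

lemma sem_q5 : ∀ a b : M, ad a (sc b) = sc (ad a b) := by
  have h := hax _ (Or.inl (show _ ∈ QTheory by simp [QTheory]) :
    closure (Term.equal (addT (Term.var (0 : Fin 2)) (succT (Term.var 1)))
      (succT (addT (Term.var 0) (Term.var (1 : Fin 2))))) ∈ PATheory)
  rw [realize_closure] at h
  intro a b
  have := h ![a, b]
  rw [Formula.realize_equal] at this
  simpa using this

lemma sem_q8 : ∀ a b : M, leR a b ↔ ∃ c : M, ad c a = b := by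
  have h := hax _ (Or.inl (show _ ∈ QTheory by simp [QTheory]) :
    closure ((leF (Term.var (0 : Fin 2)) (Term.var 1)) ⇔
      ex1 (Term.equal (addT (Term.var (Sum.inr (0 : Fin 1))) (Term.var (Sum.inl 0)))
        (Term.var (Sum.inl (1 : Fin 2))))) ∈ PATheory)
  rw [realize_closure] at h
  intro a b
  have := h ![a, b]
  rw [Formula.realize_iff, realize_leF, realize_ex1] at this
  simp only [Term.realize_var, Matrix.cons_val_zero, Matrix.cons_val_one, Matrix.head_cons,
    Sum.elim_inl, Sum.elim_inr] at this
  rw [this]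
  refine exists_congr fun c => ?_
  rw [Formula.realize_equal]
  simp

lemma sem_zero_add : ∀ a : M, ad z0 a = a := by
  have h := sem_induction hax
    (Term.equal (addT (num 0) (Term.var (Sum.inr 0))) (Term.var (Sum.inr 0)) :
      Larith.Formula (Fin 0 ⊕ Fin 1)) default ?_ ?_
  · intro a
    have := h a
    rw [Formula.realize_equal] at this
    simpa [nm] using this
  · rw [Formula.realize_equal]
    simpa [nm] using sem_q4 hax z0
  · intro a ha
    rw [Formula.realize_equal] at ha ⊢
    simp only [realize_addT, realize_num, Term.realize_var, Sum.elim_inr, realize_succT] at ha ⊢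
    rw [sem_q5 hax, ha]

lemma sem_succ_add : ∀ c a : M, ad (sc c) a = sc (ad c a) := by
  intro c
  have h := sem_induction hax
    (Term.equal (addT (succT (Term.var (Sum.inl 0))) (Term.var (Sum.inr 0)))
      (succT (addT (Term.var (Sum.inl 0)) (Term.var (Sum.inr 0)))) :
      Larith.Formula (Fin 1 ⊕ Fin 1)) (fun _ => c) ?_ ?_
  · intro a
    have := h a
    rw [Formula.realize_equal] at this
    simpa using this
  · rw [Formula.realize_equal]
    simp only [realize_addT, realize_succT, Term.realize_var, Sum.elim_inl, Sum.elim_inr]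
    rw [sem_q4 hax, sem_q4 hax]
  · intro a ha
    rw [Formula.realize_equal] at ha ⊢
    simp only [realize_addT, realize_succT, Term.realize_var, Sum.elim_inl, Sum.elim_inr] at ha ⊢
    rw [sem_q5 hax, sem_q5 hax, ha]

lemma sem_add_assoc : ∀ f e a : M, ad (ad f e) a = ad f (ad e a) := by
  intro f e
  have h := sem_induction hax
    (Term.equal (addT (addT (Term.var (Sum.inl 0)) (Term.var (Sum.inl 1))) (Term.var (Sum.inr 0)))
      (addT (Term.var (Sum.inl 0)) (addT (Term.var (Sum.inl 1)) (Term.var (Sum.inr 0)))) :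
      Larith.Formula (Fin 2 ⊕ Fin 1)) ![f, e] ?_ ?_
  · intro a
    have := h a
    rw [Formula.realize_equal] at this
    simpa using this
  · rw [Formula.realize_equal]
    simp only [realize_addT, Term.realize_var, Sum.elim_inl, Sum.elim_inr]
    simp only [Matrix.cons_val_zero, Matrix.cons_val_one, Matrix.head_cons]
    rw [sem_q4 hax, sem_q4 hax]
  · intro a ha
    rw [Formula.realize_equal] at ha ⊢
    simp only [realize_addT, realize_succT, Term.realize_var, Sum.elim_inl, Sum.elim_inr,
      Matrix.cons_val_zero, Matrix.cons_val_one, Matrix.head_cons] at ha ⊢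
    rw [sem_q5 hax, sem_q5 hax, sem_q5 hax, ha]

lemma sem_le_refl (a : M) : leR a a :=
  (sem_q8 hax a a).2 ⟨z0, sem_zero_add hax a⟩

lemma sem_le_zero {a : M} (h : leR a z0) : a = z0 := by
  obtain ⟨c, hc⟩ := (sem_q8 hax a z0).1 h
  by_contra hne
  obtain ⟨b, rfl⟩ := sem_q3 hax a hne
  rw [sem_q5 hax] at hc
  exact sem_q1 hax _ hc

lemma sem_succ_le_succ {a b : M} (h : leR a b) : leR (sc a) (sc b) := by
  obtain ⟨e, he⟩ := (sem_q8 hax a b).1 h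
  exact (sem_q8 hax _ _).2 ⟨e, by rw [sem_q5 hax, he]⟩

lemma sem_succ_le_succ_inv {a b : M} (h : leR (sc a) (sc b)) : leR a b := by
  obtain ⟨e, he⟩ := (sem_q8 hax _ _).1 h
  rw [sem_q5 hax] at he
  exact (sem_q8 hax a b).2 ⟨e, sem_q2 hax _ _ he⟩

lemma sem_le_succ {a b : M} (h : leR a b) : leR a (sc b) := by
  obtain ⟨e, he⟩ := (sem_q8 hax a b).1 h
  exact (sem_q8 hax _ _).2 ⟨sc e, by rw [sem_succ_add hax, he]⟩

lemma sem_le_succ_cases {m n : M} (h : leR m (sc n)) : leR m n ∨ m = sc n := by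
  obtain ⟨e, he⟩ := (sem_q8 hax _ _).1 h
  by_cases hz : e = z0
  · right; rw [hz, sem_zero_add hax] at he; exact he
  · obtain ⟨e', rfl⟩ := sem_q3 hax e hz
    rw [sem_succ_add hax] at he
    exact Or.inl ((sem_q8 hax m n).2 ⟨e', sem_q2 hax _ _ he⟩)

lemma sem_le_trans {a b c : M} (h1 : leR a b) (h2 : leR b c) : leR a c := by
  obtain ⟨e, he⟩ := (sem_q8 hax a b).1 h1
  obtain ⟨f, hf⟩ := (sem_q8 hax b c).1 h2
  exact (sem_q8 hax a c).2 ⟨ad f e, by rw [sem_add_assoc hax, he, hf]⟩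

lemma sem_lt_of_le_of_lt {a b c : M} (h1 : leR a b) (h2 : ltR b c) : ltR a c :=
  sem_le_trans hax (sem_succ_le_succ hax h1) h2

lemma sem_zero_le (a : M) : leR z0 a := (sem_q8 hax _ _).2 ⟨a, sem_q4 hax a⟩

lemma sem_linear : ∀ b a : M, leR a b ∨ ltR b a := by
  have h := sem_induction hax
    (all1 (leF (Term.var (Sum.inr 0)) (Term.var (Sum.inl (Sum.inr 0))) ⊔
      ltF (Term.var (Sum.inl (Sum.inr 0))) (Term.var (Sum.inr 0))) :
      Larith.Formula (Fin 0 ⊕ Fin 1)) default ?_ ?_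
  · intro b a
    have := (realize_all1 _ _).1 (h b) a
    rw [Formula.realize_sup, realize_leF, realize_ltF] at this
    simpa using this
  · rw [realize_all1]
    intro a
    rw [Formula.realize_sup, realize_leF, realize_ltF]
    simp only [Term.realize_var, Sum.elim_inl, Sum.elim_inr]
    by_cases hz : a = z0
    · exact Or.inl (by rw [hz]; exact sem_le_refl hax _)
    · obtain ⟨a', rfl⟩ := sem_q3 hax a hz
      exact Or.inr (sem_succ_le_succ hax (sem_zero_le hax a'))
  · intro b hb
    rw [realize_all1] at hb ⊢
    intro a
    have := hb a
    rw [Formula.realize_sup, realize_leF, realize_ltF] at this ⊢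
    simp only [Term.realize_var, Sum.elim_inl, Sum.elim_inr] at this ⊢
    rcases this with h1 | h1
    · exact Or.inl (sem_le_succ hax h1)
    · obtain ⟨e, he⟩ := (sem_q8 hax _ _).1 h1
      by_cases hz : e = z0
      · rw [hz, sem_zero_add hax] at he
        exact Or.inl (by rw [← he]; exact sem_le_refl hax _)
      · obtain ⟨e', rfl⟩ := sem_q3 hax e hz
        refine Or.inr ((sem_q8 hax _ _).2 ⟨e', ?_⟩)
        rw [sem_q5 hax, ← sem_succ_add hax, he]

lemma sem_lnp {k : ℕ} (φ : Larith.Formula (Fin k ⊕ Fin 1)) (p : Fin k → M) {a : M}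
    (ha : φ.Realize (Sum.elim p fun _ => a)) :
    ∃ b : M, φ.Realize (Sum.elim p fun _ => b) ∧
      ∀ c : M, ltR c b → ¬ φ.Realize (Sum.elim p fun _ => c) := by
  by_contra hno
  push_neg at hno
  -- every element satisfying φ has a smaller one satisfying φ
  have hdesc : ∀ b : M, φ.Realize (Sum.elim p fun _ => b) →
      ∃ c : M, ltR c b ∧ φ.Realize (Sum.elim p fun _ => c) := by
    intro b hb
    obtain ⟨c, hc1, hc2⟩ := hno b hb
    exact ⟨c, hc1, hc2⟩
  -- the bounded-universal formula ψ(n) := ∀ m ≤ n, ¬φ(m)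
  set r : (Fin k ⊕ Fin 1) → ((Fin k ⊕ Fin 1) ⊕ Fin 1) :=
    Sum.elim (fun i => Sum.inl (Sum.inl i)) (fun _ => Sum.inr 0) with hr
  have key : ∀ n : M, (all1 ((leF (Term.var (Sum.inr 0)) (Term.var (Sum.inl (Sum.inr 0))))
      ⟹ ∼(φ.relabel r)) : Larith.Formula (Fin k ⊕ Fin 1)).Realize
        (Sum.elim p fun _ => n) := by
    refine sem_induction hax _ p ?_ ?_
    · rw [realize_all1]
      intro m
      rw [Formula.realize_imp, realize_leF, Formula.realize_not, Formula.realize_relabel]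
      simp only [Term.realize_var, Sum.elim_inl, Sum.elim_inr]
      intro hm hφ
      have hm0 : m = z0 := sem_le_zero hax hm
      have e : ((Sum.elim (Sum.elim p fun _ => z0) fun _ => m) ∘ r) =
          Sum.elim p (fun _ => m) := by
        funext x; rcases x with x | x <;> simp [hr]
      rw [e, hm0] at hφ
      obtain ⟨c, hc1, hc2⟩ := hdesc z0 hφ
      have : sc c = z0 := sem_le_zero hax hc1
      exact sem_q1 hax c this
    · intro n hn
      rw [realize_all1] at hn ⊢
      intro m
      rw [Formula.realize_imp, realize_leF, Formula.realize_not, Formula.realize_relabel]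
      simp only [Term.realize_var, Sum.elim_inl, Sum.elim_inr]
      intro hm hφ
      have e : ((Sum.elim (Sum.elim p fun _ => sc n) fun _ => m) ∘ r) =
          Sum.elim p (fun _ => m) := by
        funext x; rcases x with x | x <;> simp [hr]
      rw [e] at hφ
      have hnm : ∀ m' : M, leR m' n → ¬ φ.Realize (Sum.elim p fun _ => m') := by
        intro m' hm' hφ'
        have := hn m'
        rw [Formula.realize_imp, realize_leF, Formula.realize_not,
          Formula.realize_relabel] at this
        simp only [Term.realize_var, Sum.elim_inl, Sum.elim_inr] at this
        have e' : ((Sum.elim (Sum.elim p fun _ => n) fun _ => m') ∘ r) =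
            Sum.elim p (fun _ => m') := by
          funext x; rcases x with x | x <;> simp [hr]
        rw [e'] at this
        exact this hm' hφ'
      rcases sem_le_succ_cases hax hm with h1 | h1
      · exact hnm m h1 hφ
      · subst h1
        obtain ⟨c, hc1, hc2⟩ := hdesc _ hφ
        exact hnm c (sem_succ_le_succ_inv hax hc1) hc2
  -- contradiction with `ha`
  have := (realize_all1 _ _).1 (key a) a
  rw [Formula.realize_imp, realize_leF, Formula.realize_not, Formula.realize_relabel] at this
  simp only [Term.realize_var, Sum.elim_inl, Sum.elim_inr] at this
  have e : ((Sum.elim (Sum.elim p fun _ => a) fun _ => a) ∘ r) =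
      Sum.elim p (fun _ => a) := by
    funext x; rcases x with x | x <;> simp [hr]
  rw [e] at this
  exact this (sem_le_refl hax a) ha

lemma sem_le_nm {a : M} : ∀ {n : ℕ}, leR a (nm n) → ∃ i ≤ n, a = nm i := by
  intro n
  induction n generalizing a with
  | zero => intro h; exact ⟨0, le_refl 0, sem_le_zero hax h⟩
  | succ n ih =>
      intro h
      rcases sem_le_succ_cases hax (h : leR a (sc (nm n))) with h1 | h1
      · obtain ⟨i, hi, rfl⟩ := ih h1
        exact ⟨i, Nat.le_succ_of_le hi, rfl⟩
      · exact ⟨n + 1, le_refl _, h1⟩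

omit hax in
lemma nm_succ_ne_zero_aux : True := trivial

lemma sem_nm_inj : ∀ {i j : ℕ}, (nm i : M) = nm j → i = j := by
  intro i
  induction i with
  | zero =>
      intro j h
      cases j with
      | zero => rfl
      | succ j => exact absurd h.symm (sem_q1 hax (nm j))
  | succ i ih =>
      intro j h
      cases j with
      | zero => exact absurd h (sem_q1 hax (nm i))
      | succ j => rw [ih (sem_q2 hax _ _ h)]
end PAmodel

/-- If `T` is a consistent, complete, recursively axiomatized
first-order theory extending Peano Arithmetic, then there exists at least one
standard sentence `s` such that `T ⊢ remote(⁰⌜s⌝)`; consequently the defining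
condition of `𝔎` (the minimal code of a proof of a remote sentence) is
satisfiable in `T`: `T ⊢ ∃x (x = min k : ∃y (remote(y) ∧ Proof_T(k, y)))`. -/
theorem statement_11 (T : Larith.Theory) (hPA : PATheory ⊆ T) (hcon : Consistent T)
    (hcomp : Complete T) (G : GodelSetting T) (hdgn : DgnRepresents T G) :
    (∃ s : Larith.Sentence, Proves T (remoteAt G.ProofF G.DgnF (num (G.code s)))) ∧
    Proves T (ex1 (isKAt G.ProofF G.DgnF (Term.var (Sum.inr 0)))) := by
  classical
  -- Fix a model of `T`
  obtain ⟨M⟩ : Nonempty (Theory.ModelType T) := by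
    by_contra h
    exact hcon fun M' _ _ => (h ⟨M'⟩).elim
  have mtrue : ∀ φ : Larith.Sentence, Proves T φ → M ⊨ φ := fun φ h =>
    h.realize_sentence M
  have ttrue : ∀ φ : Larith.Sentence, (M ⊨ φ) → Proves T φ := fun φ h =>
    (hcomp φ).resolve_right fun h' => (mtrue _ h') h
  have hax : ∀ σ ∈ PATheory, (M : Type _) ⊨ σ := fun σ hσ =>
    mtrue σ (Theory.models_sentence_of_mem (hPA hσ))
  set pf := G.ProofF with hpf
  set dgn := G.DgnF with hdgnf
  have app2_iff : ∀ (θ : Larith.Formula (Fin 2)) (n m : ℕ),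
      ((M : Type _) ⊨ app2 θ (num n) (num m)) ↔ θ.Realize ![(nm n : M), nm m] := by
    intro θ n m
    rw [Sentence.Realize, realize_app2]
    simp
  have lnpPf : ∀ (m : ℕ) (b : M),
      ((app2 pf (Term.var (Sum.inr 0)) (num m) : Larith.Formula (Fin 0 ⊕ Fin 1)).Realize
        (Sum.elim default fun _ => b)) ↔ PfR pf b (nm m) := by
    intro m b
    rw [realize_app2]
    simp [PfR]
  -- The Gödel sentence
  set φg : Larith.Formula (Fin 1) :=
    ∼(ex1 (app2 pf (Term.var (Sum.inr 0)) (Term.var (Sum.inl 0)))) with hφg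
  set g := G.diag φg with hgdef
  set cg := G.code g with hcg
  have hg_iff : ((M : Type _) ⊨ g) ↔ ¬ ∃ x : M, PfR pf x (nm cg) := by
    have h := mtrue _ (G.diag_spec φg)
    rw [Sentence.Realize, Formula.realize_iff, realize_app1] at h
    rw [Sentence.Realize, h, hφg, Formula.realize_not, realize_ex1]
    refine not_congr (exists_congr fun x => ?_)
    rw [realize_app2]
    simp [PfR]
    exact Iff.rfl
  have hg_false : ¬ ((M : Type _) ⊨ g) := by
    intro h
    obtain ⟨n, hn⟩ := G.proof_complete g (ttrue g h)
    exact (hg_iff.1 h) ⟨nm n, (app2_iff _ _ _).1 (mtrue _ hn)⟩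
  have hexg : ∃ x : M, PfR pf x (nm cg) := not_not.1 fun hne => hg_false (hg_iff.2 hne)
  have hnostd : ∀ i : ℕ, ¬ PfR pf (nm i : M) (nm cg) := by
    intro i hi
    rcases G.proof_decide i cg with h | h
    · exact hg_false (mtrue g (G.proof_sound g i h))
    · exact (mtrue _ h) ((app2_iff _ _ _).2 hi)
  -- minimal proof of the Gödel sentence (a nonstandard element)
  obtain ⟨x0, hx0⟩ := hexg
  obtain ⟨k, hk, hkmin⟩ := sem_lnp hax
    (app2 pf (Term.var (Sum.inr 0)) (num cg) : Larith.Formula (Fin 0 ⊕ Fin 1)) default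
    ((lnpPf cg x0).2 hx0)
  have hKmin : IsMinPf pf k (nm cg) :=
    ⟨(lnpPf cg k).1 hk, fun w hw hP => hkmin w hw ((lnpPf cg w).2 hP)⟩
  have hk_big : ∀ n : ℕ, ltR (nm n) k := by
    intro n
    rcases sem_linear hax (nm n) k with h | h
    · obtain ⟨i, _, hki⟩ := sem_le_nm hax h
      exact absurd (hki ▸ hKmin.1) (hnostd i)
    · exact h
  -- the diagonal sentence of the extension of the Gödel sentence
  set d := G.diag (extFormula pf cg) with hddef
  set cd := G.code d with hcd
  have hd_iff : ((M : Type _) ⊨ d) ↔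
      ∀ x y : M, PfR pf x (nm cd) → IsMinPf pf y (nm cg) → leR y x := by
    have h := mtrue _ (G.diag_spec (extFormula pf cg))
    rw [Sentence.Realize, Formula.realize_iff, realize_app1] at h
    rw [Sentence.Realize, h, extFormula, realize_extFormulaAt]
    simp only [Term.realize_var, realize_num]
    rfl
  have hDgn : DgnR dgn (nm cd : M) (nm cg) := by
    have h := mtrue _ (hdgn.1 g)
    exact (app2_iff _ _ _).1 h
  -- the sentence coded by `cg` is remote in `M`
  have hrem : RemR pf dgn (nm cg : M) := by
    by_cases hd : (M : Type _) ⊨ d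
    · obtain ⟨n0, hn0⟩ := G.proof_complete d (ttrue d hd)
      have hQ : ∃ i : ℕ, PfR pf (nm i : M) (nm cd) := ⟨n0, (app2_iff _ _ _).1 (mtrue _ hn0)⟩
      set n := Nat.find hQ with hn
      have hPn : PfR pf (nm n : M) (nm cd) := Nat.find_spec hQ
      have hminz : IsMinPf pf (nm n : M) (nm cd) := by
        refine ⟨hPn, fun w hw hPw => ?_⟩
        obtain ⟨j, hj, hscw⟩ := sem_le_nm hax hw
        cases j with
        | zero => exact sem_q1 hax w hscw
        | succ i =>
            have hwi : w = nm i := sem_q2 hax _ _ hscw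
            rw [hwi] at hPw
            exact Nat.find_min hQ (Nat.lt_of_succ_le hj) hPw
      exact ⟨nm cd, k, nm n, hDgn, hKmin, hminz, hk_big n⟩
    · have h2 : ¬ ∀ x y : M, PfR pf x (nm cd) → IsMinPf pf y (nm cg) → leR y x :=
        fun hh => hd (hd_iff.2 hh)
      push_neg at h2
      obtain ⟨x, y, hx, hy, hyx⟩ := h2
      have hxy : ltR x y := (sem_linear hax x y).resolve_left hyx
      obtain ⟨z, hz, hzmin⟩ := sem_lnp hax
        (app2 pf (Term.var (Sum.inr 0)) (num cd) : Larith.Formula (Fin 0 ⊕ Fin 1)) default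
        ((lnpPf cd x).2 hx)
      have hzMin : IsMinPf pf z (nm cd : M) :=
        ⟨(lnpPf cd z).1 hz, fun w hw hP => hzmin w hw ((lnpPf cd w).2 hP)⟩
      have hzx : leR z x := by
        rcases sem_linear hax x z with h | h
        · exact h
        · exact absurd ((lnpPf cd x).2 hx) (hzmin x h)
      exact ⟨nm cd, y, z, hDgn, hy, hzMin, sem_lt_of_le_of_lt hax hzx hxy⟩
  constructor
  · refine ⟨g, ttrue _ ?_⟩
    rw [Sentence.Realize, realize_remoteAt]
    simpa using hrem
  · refine ttrue _ ?_
    rw [Sentence.Realize, realize_ex1]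
    have hnonempty : PRemR pf dgn (x0 : M) := ⟨nm cg, hrem, hx0⟩
    obtain ⟨b, hb, hbmin⟩ := sem_lnp hax
      (provesRemoteAt pf dgn (Term.var (Sum.inr 0)) : Larith.Formula (Fin 0 ⊕ Fin 1)) default
      ((by rw [realize_provesRemoteAt]; simpa using hnonempty :
        (provesRemoteAt pf dgn (Term.var (Sum.inr 0)) : Larith.Formula (Fin 0 ⊕ Fin 1)).Realize
          (Sum.elim default fun _ => x0)))
    refine ⟨b, ?_⟩
    rw [realize_isKAt]
    simp only [Term.realize_var, Sum.elim_inr]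
    constructor
    · have := hb
      rw [realize_provesRemoteAt] at this
      simpa using this
    · intro w hw hP
      refine hbmin w hw ?_
      rw [realize_provesRemoteAt]
      simpa using hP

end GodelStalk
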